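/- Let p be a prime number and R a noetherian commutative ring such that every nilpotent element of R is annihilated by a power of p (equivalently, the localization R[1/p] is reduced). Then every Witt vector x ∈ 𝕎 R all of whose coefficients are nilpotent is annihilated by a power of p: there exists m with p^m·x = 0. -/

import Mathlib

open MvPolynomial

namespace Stmt11Aux

variable {p : ℕ} [hp : Fact p.Prime]

/-- Killing one side of the variables fixes the coefficients at monomials supported on the
other side. -/
lemma coeff_aeval_kill (s : Fin 2) (φ : MvPolynomial (Fin 2 × ℕ) ℤ)
    (d : (Fin 2 × ℕ) →₀ ℕ) (hd : ∀ v ∈ d.support, v.1 = s) :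
    MvPolynomial.coeff d
      (aeval (fun v : Fin 2 × ℕ =>
        if v.1 = s then (X v : MvPolynomial (Fin 2 × ℕ) ℤ) else 0) φ)
      = MvPolynomial.coeff d φ := by
  classical
  set h : Fin 2 × ℕ → MvPolynomial (Fin 2 × ℕ) ℤ :=
    fun v => if v.1 = s then (X v : MvPolynomial (Fin 2 × ℕ) ℤ) else 0 with hh
  conv_lhs => rw [φ.as_sum]
  rw [map_sum, MvPolynomial.coeff_sum]
  have key : ∀ e : (Fin 2 × ℕ) →₀ ℕ, ∀ c : ℤ,
      MvPolynomial.coeff d (aeval h (monomial e c)) = if e = d then c else 0 := by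
    intro e c
    by_cases he : ∀ v ∈ e.support, v.1 = s
    · have heq : aeval h (monomial e c) = monomial e c := by
        rw [aeval_monomial]
        have : (e.prod fun v k => h v ^ k)
            = e.prod fun v k => (X v : MvPolynomial (Fin 2 × ℕ) ℤ) ^ k := by
          apply Finsupp.prod_congr
          intro v hv
          rw [hh]; simp only [if_pos (he v hv)]
        rw [this, monomial_eq]
        congr 1
      rw [heq, coeff_monomial]
    · push_neg at he
      obtain ⟨v₀, hv₀, hv₀s⟩ := he
      have heq : aeval h (monomial e c) = 0 := by
        rw [aeval_monomial]
        have : (e.prod fun v k => h v ^ k) = 0 := by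
          rw [Finsupp.prod]
          apply Finset.prod_eq_zero hv₀
          rw [hh]
          simp only [if_neg hv₀s]
          exact zero_pow (Finsupp.mem_support_iff.mp hv₀)
        rw [this, mul_zero]
      rw [heq, MvPolynomial.coeff_zero, eq_comm]
      rw [if_neg]
      rintro rfl
      exact hv₀s (hd _ hv₀)
  calc (∑ e ∈ φ.support, MvPolynomial.coeff d (aeval h (monomial e (MvPolynomial.coeff e φ))))
      = ∑ e ∈ φ.support, if e = d then MvPolynomial.coeff e φ else 0 := by
        exact Finset.sum_congr rfl fun e _ => key e _
    _ = MvPolynomial.coeff d φ := by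
        rw [Finset.sum_ite_eq' φ.support d (fun e => MvPolynomial.coeff e φ)]
        split_ifs with hmem
        · rfl
        · exact (MvPolynomial.notMem_support_iff.mp hmem).symm

lemma aeval_wittAdd_side0 (n : ℕ) :
    aeval (fun v : Fin 2 × ℕ =>
        if v.1 = (0 : Fin 2) then (X v : MvPolynomial (Fin 2 × ℕ) ℤ) else 0)
      (WittVector.wittAdd p n) = X ((0 : Fin 2), n) := by
  have h0 := WittVector.add_coeff
    (WittVector.mk p (fun i => (X ((0 : Fin 2), i) : MvPolynomial (Fin 2 × ℕ) ℤ))) 0 n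
  rw [add_zero, WittVector.coeff_mk] at h0
  rw [WittVector.peval] at h0
  have hfun : (Function.uncurry
      ![(fun i => (X ((0 : Fin 2), i) : MvPolynomial (Fin 2 × ℕ) ℤ)),
        (0 : WittVector p (MvPolynomial (Fin 2 × ℕ) ℤ)).coeff])
      = fun v : Fin 2 × ℕ =>
        if v.1 = (0 : Fin 2) then (X v : MvPolynomial (Fin 2 × ℕ) ℤ) else 0 := by
    funext v
    obtain ⟨i, k⟩ := v
    fin_cases i <;>
      simp [Function.uncurry, WittVector.coeff_mk, WittVector.zero_coeff]
  rw [hfun] at h0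
  exact h0.symm

lemma aeval_wittAdd_side1 (n : ℕ) :
    aeval (fun v : Fin 2 × ℕ =>
        if v.1 = (1 : Fin 2) then (X v : MvPolynomial (Fin 2 × ℕ) ℤ) else 0)
      (WittVector.wittAdd p n) = X ((1 : Fin 2), n) := by
  have h0 := WittVector.add_coeff 0
    (WittVector.mk p (fun i => (X ((1 : Fin 2), i) : MvPolynomial (Fin 2 × ℕ) ℤ))) n
  rw [zero_add, WittVector.coeff_mk] at h0
  rw [WittVector.peval] at h0
  have hfun : (Function.uncurry
      ![(0 : WittVector p (MvPolynomial (Fin 2 × ℕ) ℤ)).coeff,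
        (fun i => (X ((1 : Fin 2), i) : MvPolynomial (Fin 2 × ℕ) ℤ))])
      = fun v : Fin 2 × ℕ =>
        if v.1 = (1 : Fin 2) then (X v : MvPolynomial (Fin 2 × ℕ) ℤ) else 0 := by
    funext v
    obtain ⟨i, k⟩ := v
    fin_cases i <;>
      simp [Function.uncurry, WittVector.coeff_mk, WittVector.zero_coeff]
  rw [hfun] at h0
  exact h0.symm

lemma aeval_wittAdd_sq_zero {R : Type*} [CommRing R] (I : Ideal R)
    (hI : ∀ a ∈ I, ∀ b ∈ I, a * b = 0)
    (g : Fin 2 × ℕ → R) (hg : ∀ v, g v ∈ I) (n : ℕ) :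
    aeval g (WittVector.wittAdd p n) = g (0, n) + g (1, n) := by
  classical
  set Φ' : MvPolynomial (Fin 2 × ℕ) ℤ :=
    WittVector.wittAdd p n - X (0, n) - X (1, n) with hΦ'
  have fin2 : ∀ t : Fin 2, t = 0 ∨ t = 1 := by decide
  have hXcoeff : ∀ (u : Fin 2 × ℕ) (d : (Fin 2 × ℕ) →₀ ℕ),
      (∀ v ∈ d.support, v.1 ≠ u.1) →
      MvPolynomial.coeff d (X u : MvPolynomial (Fin 2 × ℕ) ℤ) = 0 := by
    intro u d hd
    rw [MvPolynomial.coeff_X', if_neg]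
    rintro rfl
    exact hd u (by simp) rfl
  have hsupp : ∀ d ∈ Φ'.support,
      (∃ i, ((0 : Fin 2), i) ∈ d.support) ∧ (∃ j, ((1 : Fin 2), j) ∈ d.support) := by
    intro d hd
    rw [MvPolynomial.mem_support_iff] at hd
    constructor
    · by_contra hno
      push_neg at hno
      have hside : ∀ v ∈ d.support, v.1 = (1 : Fin 2) := by
        intro v hv
        rcases fin2 v.1 with h0 | h1
        · exfalso
          exact hno v.2 (by rwa [show ((0 : Fin 2), v.2) = v from Prod.ext h0.symm rfl])
        · exact h1
      apply hd
      have hW : MvPolynomial.coeff d (WittVector.wittAdd p n)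
          = MvPolynomial.coeff d (X ((1 : Fin 2), n) : MvPolynomial (Fin 2 × ℕ) ℤ) := by
        rw [← coeff_aeval_kill 1 (WittVector.wittAdd p n) d hside, aeval_wittAdd_side1 n]
      have h0c : MvPolynomial.coeff d (X ((0 : Fin 2), n) : MvPolynomial (Fin 2 × ℕ) ℤ) = 0 :=
        hXcoeff ((0 : Fin 2), n) d (fun v hv => by rw [hside v hv]; simp)
      rw [hΦ']
      simp only [MvPolynomial.coeff_sub, hW, h0c]
      ring
    · by_contra hno
      push_neg at hno
      have hside : ∀ v ∈ d.support, v.1 = (0 : Fin 2) := by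
        intro v hv
        rcases fin2 v.1 with h0 | h1
        · exact h0
        · exfalso
          exact hno v.2 (by rwa [show ((1 : Fin 2), v.2) = v from Prod.ext h1.symm rfl])
      apply hd
      have hW : MvPolynomial.coeff d (WittVector.wittAdd p n)
          = MvPolynomial.coeff d (X ((0 : Fin 2), n) : MvPolynomial (Fin 2 × ℕ) ℤ) := by
        rw [← coeff_aeval_kill 0 (WittVector.wittAdd p n) d hside, aeval_wittAdd_side0 n]
      have h1c : MvPolynomial.coeff d (X ((1 : Fin 2), n) : MvPolynomial (Fin 2 × ℕ) ℤ) = 0 :=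
        hXcoeff ((1 : Fin 2), n) d (fun v hv => by rw [hside v hv]; simp)
      rw [hΦ']
      simp only [MvPolynomial.coeff_sub, hW, h1c]
      ring
  have hzero : aeval g Φ' = 0 := by
    conv_lhs => rw [Φ'.as_sum]
    rw [map_sum]
    apply Finset.sum_eq_zero
    intro d hd
    obtain ⟨⟨i, hi⟩, ⟨j, hj⟩⟩ := hsupp d hd
    rw [aeval_monomial]
    have hne : ((1 : Fin 2), j) ≠ ((0 : Fin 2), i) := by
      intro hcon
      simpa using congrArg (fun q : Fin 2 × ℕ => (q.1 : ℕ)) hcon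
    have hprod : (d.prod fun v k => g v ^ k) = 0 := by
      rw [Finsupp.prod]
      rw [← Finset.mul_prod_erase d.support _ hi]
      have hjmem : ((1 : Fin 2), j) ∈ d.support.erase ((0 : Fin 2), i) :=
        Finset.mem_erase.mpr ⟨hne, hj⟩
      have hb : (∏ v ∈ d.support.erase ((0 : Fin 2), i), g v ^ d v) ∈ I := by
        rw [← Finset.mul_prod_erase _ _ hjmem]
        exact I.mul_mem_right _
          (I.pow_mem_of_mem (hg _) _ (Nat.pos_of_ne_zero (Finsupp.mem_support_iff.mp hj)))
      exact hI _ (I.pow_mem_of_mem (hg _) _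
        (Nat.pos_of_ne_zero (Finsupp.mem_support_iff.mp hi))) _ hb
    rw [hprod, mul_zero]
  have : WittVector.wittAdd p n = Φ' + X (0, n) + X (1, n) := by rw [hΦ']; ring
  rw [this, map_add, map_add, hzero, aeval_X, aeval_X, zero_add]

variable {R : Type*} [CommRing R]

lemma add_coeff_of_sq_zero (I : Ideal R) (hI : ∀ a ∈ I, ∀ b ∈ I, a * b = 0)
    (x y : WittVector p R) (hx : ∀ k, x.coeff k ∈ I) (hy : ∀ k, y.coeff k ∈ I) (n : ℕ) :
    (x + y).coeff n = x.coeff n + y.coeff n := by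
  rw [WittVector.add_coeff, WittVector.peval]
  have hg : ∀ v : Fin 2 × ℕ, Function.uncurry ![x.coeff, y.coeff] v ∈ I := by
    rintro ⟨i, k⟩
    fin_cases i
    · simpa [Function.uncurry] using hx k
    · simpa [Function.uncurry] using hy k
  rw [aeval_wittAdd_sq_zero I hI _ hg n]
  simp [Function.uncurry]

lemma nsmul_coeff_of_sq_zero (I : Ideal R) (hI : ∀ a ∈ I, ∀ b ∈ I, a * b = 0)
    (x : WittVector p R) (hx : ∀ k, x.coeff k ∈ I) :
    ∀ (m : ℕ) (k : ℕ), (m • x).coeff k = m • x.coeff k := by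
  intro m
  induction m with
  | zero => intro k; simp
  | succ m ih =>
    intro k
    have hmx : ∀ k, (m • x).coeff k ∈ I := by
      intro k
      rw [ih k]
      exact AddSubmonoid.nsmul_mem I.toAddSubmonoid (hx k) m
    rw [succ_nsmul, add_coeff_of_sq_zero I hI _ x hmx hx, ih k, succ_nsmul]

lemma pow_p_mul_eq_zero_of_sq_zero (I : Ideal R) (hI : ∀ a ∈ I, ∀ b ∈ I, a * b = 0)
    (M : ℕ) (hM : ∀ a ∈ I, (p : R) ^ M * a = 0)
    (x : WittVector p R) (hx : ∀ k, x.coeff k ∈ I) :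
    (p : WittVector p R) ^ M * x = 0 := by
  have key : (p : WittVector p R) ^ M * x = (p ^ M) • x := by
    rw [nsmul_eq_mul]
    push_cast
    ring
  rw [key]
  ext k
  rw [nsmul_coeff_of_sq_zero I hI x hx, WittVector.zero_coeff, nsmul_eq_mul]
  push_cast
  exact hM _ (hx k)

lemma step (I : Ideal R) (M : ℕ) (hM : ∀ a ∈ I, (p : R) ^ M * a = 0)
    (x : WittVector p R) (hx : ∀ k, x.coeff k ∈ I) :
    ∀ k, ((p : WittVector p R) ^ M * x).coeff k ∈ I * I := by
  intro k
  set f := Ideal.Quotient.mk (I * I) with hf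
  have hmem : ∀ b ∈ I.map f, ∃ a ∈ I, f a = b := by
    intro b hb
    obtain ⟨a, ha, rfl⟩ := (Ideal.mem_map_iff_of_surjective f Ideal.Quotient.mk_surjective).mp hb
    exact ⟨a, ha, rfl⟩
  have hJ2 : ∀ a ∈ I.map f, ∀ b ∈ I.map f, a * b = 0 := by
    intro a ha b hb
    obtain ⟨a₀, ha₀, rfl⟩ := hmem a ha
    obtain ⟨b₀, hb₀, rfl⟩ := hmem b hb
    rw [← map_mul]
    exact Ideal.Quotient.eq_zero_iff_mem.mpr (Ideal.mul_mem_mul ha₀ hb₀)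
  have hJM : ∀ a ∈ I.map f, (p : R ⧸ (I * I)) ^ M * a = 0 := by
    intro a ha
    obtain ⟨a₀, ha₀, rfl⟩ := hmem a ha
    have : (p : R ⧸ (I * I)) ^ M * f a₀ = f ((p : R) ^ M * a₀) := by
      rw [map_mul, map_pow, map_natCast]
    rw [this, hM a₀ ha₀, map_zero]
  have h0 : (p : WittVector p (R ⧸ (I * I))) ^ M * WittVector.map f x = 0 :=
    pow_p_mul_eq_zero_of_sq_zero (I.map f) hJ2 M hJM _
      (fun k => by rw [WittVector.map_coeff]; exact Ideal.mem_map_of_mem f (hx k))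
  have hmap : WittVector.map f ((p : WittVector p R) ^ M * x) = 0 := by
    rw [map_mul, map_pow, map_natCast]
    exact h0
  have := congrArg (fun z : WittVector p (R ⧸ (I * I)) => z.coeff k) hmap
  simp only [WittVector.map_coeff, WittVector.zero_coeff] at this
  exact Ideal.Quotient.eq_zero_iff_mem.mp this

end Stmt11Aux

/-- Over a noetherian commutative ring `R` in which every nilpotent element is annihilated
by a power of `p`, every `p`-typical Witt vector all of whose coefficients are nilpotent is
annihilated by a power of `p`. -/
theorem stmt11 (p : ℕ) [Fact p.Prime] (R : Type*) [CommRing R] [IsNoetherianRing R]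
    (h : ∀ x : R, IsNilpotent x → ∃ m : ℕ, (p : R) ^ m * x = 0)
    (x : WittVector p R) (hx : ∀ k, IsNilpotent (x.coeff k)) :
    ∃ m : ℕ, (p : WittVector p R) ^ m * x = 0 := by
  classical
  set N := nilradical R with hN
  obtain ⟨S, hS⟩ := (IsNoetherian.noetherian N : N.FG)
  set g : R → ℕ := fun a => if ha : IsNilpotent a then (h a ha).choose else 0 with hg
  have hgspec : ∀ a : R, IsNilpotent a → (p : R) ^ (g a) * a = 0 := by
    intro a ha
    rw [hg]
    simp only [dif_pos ha]
    exact (h a ha).choose_spec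
  set M := S.sup g with hM
  have hMN : ∀ a ∈ N, (p : R) ^ M * a = 0 := by
    intro a haN
    rw [← hS] at haN
    induction haN using Submodule.span_induction with
    | mem a haS =>
      have hanil : IsNilpotent a := by
        rw [← mem_nilradical, ← hN, ← hS]
        exact Submodule.subset_span haS
      have hle : g a ≤ M := Finset.le_sup haS
      calc (p : R) ^ M * a = (p : R) ^ (M - g a) * ((p : R) ^ (g a) * a) := by
            rw [← mul_assoc, ← pow_add, Nat.sub_add_cancel hle]
        _ = 0 := by rw [hgspec a hanil, mul_zero]
    | zero => rw [mul_zero]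
    | add a b _ _ iha ihb => rw [mul_add, iha, ihb, add_zero]
    | smul r a _ iha =>
      rw [smul_eq_mul, mul_left_comm, iha, mul_zero]
  obtain ⟨c, hc⟩ := IsNoetherianRing.isNilpotent_nilradical R
  have key : ∀ t : ℕ, ∀ k : ℕ,
      ((p : WittVector p R) ^ (M * t) * x).coeff k ∈ N ^ (2 ^ t) := by
    intro t
    induction t with
    | zero =>
      intro k
      simpa using (mem_nilradical.mpr (hx k))
    | succ t ih =>
      set I := N ^ (2 ^ t) with hI
      have hIN : I ≤ N := Ideal.pow_le_self (by positivity)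
      have hIM : ∀ a ∈ I, (p : R) ^ M * a = 0 := fun a ha => hMN a (hIN ha)
      have hstep := Stmt11Aux.step I M hIM ((p : WittVector p R) ^ (M * t) * x) ih
      intro k
      have hre : (p : WittVector p R) ^ M * ((p : WittVector p R) ^ (M * t) * x)
          = (p : WittVector p R) ^ (M * (t + 1)) * x := by
        rw [← mul_assoc, ← pow_add]
        congr 2
        ring
      have hpow : N ^ (2 ^ (t + 1)) = I * I := by
        rw [hI, ← pow_add]
        congr 1
        rw [pow_succ]
        omega
      rw [hpow, ← hre]
      exact hstep k
  refine ⟨M * c, ?_⟩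
  ext k
  have hk := key c k
  have hle : N ^ (2 ^ c) ≤ N ^ c := Ideal.pow_le_pow_right (Nat.le_of_lt (Nat.lt_pow_self (by norm_num : 1 < 2)))
  rw [hc] at hle
  have h0 := hle hk
  rw [Ideal.zero_eq_bot, Ideal.mem_bot] at h0
  rw [h0, WittVector.zero_coeff]
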